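/- Define for $h, k \in \mathbb{Z}^2$ with $h \neq 0$, $k \neq 0$, $h \neq k$: $c_{h,k} = -\frac{1}{4\pi} \frac{h^\perp \cdot k}{|h| |k-h|} \left[ |k| - 2\frac{h \cdot k}{|k|} \right]$, where $h^\perp = (-h_2, h_1)$. Then $c_{h,k} = c_{k-h,k}$. -/

import Mathlib

noncomputable def znorm (k : ℤ × ℤ) : ℝ := Real.sqrt ((k.1 : ℝ)^2 + (k.2 : ℝ)^2)

lemma znorm_ne_zero {k : ℤ × ℤ} (hk : k ≠ 0) : znorm k ≠ 0 := by
  have hsum : (0:ℝ) < (k.1 : ℝ)^2 + (k.2 : ℝ)^2 := by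
    by_contra hle
    push_neg at hle
    have h1 : (k.1:ℝ) = 0 := by nlinarith [sq_nonneg (k.1:ℝ), sq_nonneg (k.2:ℝ)]
    have h2 : (k.2:ℝ) = 0 := by nlinarith [sq_nonneg (k.1:ℝ), sq_nonneg (k.2:ℝ)]
    exact hk (Prod.ext (by exact_mod_cast h1) (by exact_mod_cast h2))
  unfold znorm
  positivity

lemma znorm_sq {k : ℤ × ℤ} : znorm k ^ 2 = (k.1 : ℝ)^2 + (k.2 : ℝ)^2 :=
  Real.sq_sqrt (by positivity)

/-- The Fourier coefficient of the 2D Navier–Stokes nonlinearity. -/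
noncomputable def nsCoeff (h k : ℤ × ℤ) : ℝ :=
  -(1 / (4 * Real.pi)) *
    (((-h.2 : ℝ) * k.1 + (h.1 : ℝ) * k.2) / (znorm h * znorm (k - h))) *
    (znorm k - 2 * ((h.1 : ℝ) * k.1 + (h.2 : ℝ) * k.2) / znorm k)

/-- the symmetry `c_{h,k} = c_{k-h,k}`. -/
theorem nsCoeff_symm (h k : ℤ × ℤ) (hh : h ≠ 0) (hk : k ≠ 0) (hhk : h ≠ k) :
    nsCoeff h k = nsCoeff (k - h) k := by
  have hzk := znorm_ne_zero hk
  have hzh := znorm_ne_zero hh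
  have hzkh : znorm (k - h) ≠ 0 := znorm_ne_zero (sub_ne_zero.mpr (Ne.symm hhk))
  have hsq : znorm k ^ 2 = (k.1 : ℝ)^2 + (k.2 : ℝ)^2 := znorm_sq
  have hcancel : k - (k - h) = h := by abel
  unfold nsCoeff
  rw [hcancel]
  push_cast [Prod.fst_sub, Prod.snd_sub]
  field_simp
  linear_combination (2 * ((h.2:ℝ)*k.1 - h.1*k.2)) * hsq
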